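/- Let C be a category with pushouts. Suppose given objects P, S1, S2, T1, T2, M11, M12, M21, M22 of C and morphisms a1 : P → S1, a2 : P → S2, b1 : P → T1, b2 : P → T2, together with s1t : S1 → M11, s1b : S1 → M21, s2t : S2 → M12, s2b : S2 → M22, t1l : T1 → M11, t1r : T1 → M12, t2l : T2 → M21, t2r : T2 → M22, satisfying s1t ∘ a1 = t1l ∘ b1, s2t ∘ a2 = t1r ∘ b1, s1b ∘ a1 = t2l ∘ b2, and s2b ∘ a2 = t2r ∘ b2. Form the pushouts H1 = M11 ⊔_{T1} M12 (of t1l and t1r), H2 = M21 ⊔_{T2} M22 (of t2l and t2r), and S = S1 ⊔_P S2 (of a1 and a2), with the induced morphisms σ1 : S → H1 (determined by incl_{M11} ∘ s1t and incl_{M12} ∘ s2t) and σ2 : S → H2 (determined by incl_{M21} ∘ s1b and incl_{M22} ∘ s2b). Dually form V1 = M11 ⊔_{S1} M21, V2 = M12 ⊔_{S2} M22, and T = T1 ⊔_P T2, with the induced morphisms τ1 : T → V1 and τ2 : T → V2. Then there is an isomorphism between the pushout H1 ⊔_S H2 (of σ1 and σ2) and the pushout V1 ⊔_T V2 (of τ1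 and τ2) which commutes with the four canonical morphisms from M11, M12, M21, and M22 into each side. (Interchange law for horizontal and vertical composition of double cospan squares.) -/

import Mathlib

open CategoryTheory CategoryTheory.Limits

/-- Interchange law for horizontal and vertical composition of double cospan
squares: composing the two rows horizontally and then pushing out vertically
gives an object canonically isomorphic to the one obtained by composing the
two columns vertically and then pushing out horizontally, compatibly with the
four canonical maps from the square middles `M11, M12, M21, M22`. -/
theorem double_cospan_interchange
    {C : Type*} [Category C] [HasPushouts C]
    {P S1 S2 T1 T2 M11 M12 M21 M22 : C}
    (a1 : P ⟶ S1) (a2 : P ⟶ S2) (b1 : P ⟶ T1) (b2 : P ⟶ T2)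
    (s1t : S1 ⟶ M11) (s1b : S1 ⟶ M21) (s2t : S2 ⟶ M12) (s2b : S2 ⟶ M22)
    (t1l : T1 ⟶ M11) (t1r : T1 ⟶ M12) (t2l : T2 ⟶ M21) (t2r : T2 ⟶ M22)
    (h11 : a1 ≫ s1t = b1 ≫ t1l) (h12 : a2 ≫ s2t = b1 ≫ t1r)
    (h21 : a1 ≫ s1b = b2 ≫ t2l) (h22 : a2 ≫ s2b = b2 ≫ t2r)
    -- the induced map σ1 : S = S1 ⊔_P S2 ⟶ H1 = M11 ⊔_{T1} M12
    (σ1 : pushout a1 a2 ⟶ pushout t1l t1r)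
    (hσ1l : pushout.inl a1 a2 ≫ σ1 = s1t ≫ pushout.inl t1l t1r)
    (hσ1r : pushout.inr a1 a2 ≫ σ1 = s2t ≫ pushout.inr t1l t1r)
    -- the induced map σ2 : S ⟶ H2 = M21 ⊔_{T2} M22
    (σ2 : pushout a1 a2 ⟶ pushout t2l t2r)
    (hσ2l : pushout.inl a1 a2 ≫ σ2 = s1b ≫ pushout.inl t2l t2r)
    (hσ2r : pushout.inr a1 a2 ≫ σ2 = s2b ≫ pushout.inr t2l t2r)
    -- the induced map τ1 : T = T1 ⊔_P T2 ⟶ V1 = M11 ⊔_{S1} M21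
    (τ1 : pushout b1 b2 ⟶ pushout s1t s1b)
    (hτ1l : pushout.inl b1 b2 ≫ τ1 = t1l ≫ pushout.inl s1t s1b)
    (hτ1r : pushout.inr b1 b2 ≫ τ1 = t2l ≫ pushout.inr s1t s1b)
    -- the induced map τ2 : T ⟶ V2 = M12 ⊔_{S2} M22
    (τ2 : pushout b1 b2 ⟶ pushout s2t s2b)
    (hτ2l : pushout.inl b1 b2 ≫ τ2 = t1r ≫ pushout.inl s2t s2b)
    (hτ2r : pushout.inr b1 b2 ≫ τ2 = t2r ≫ pushout.inr s2t s2b) :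
    ∃ e : pushout σ1 σ2 ≅ pushout τ1 τ2,
      (pushout.inl t1l t1r ≫ pushout.inl σ1 σ2) ≫ e.hom
        = pushout.inl s1t s1b ≫ pushout.inl τ1 τ2 ∧
      (pushout.inr t1l t1r ≫ pushout.inl σ1 σ2) ≫ e.hom
        = pushout.inl s2t s2b ≫ pushout.inr τ1 τ2 ∧
      (pushout.inl t2l t2r ≫ pushout.inr σ1 σ2) ≫ e.hom
        = pushout.inr s1t s1b ≫ pushout.inl τ1 τ2 ∧
      (pushout.inr t2l t2r ≫ pushout.inr σ1 σ2) ≫ e.hom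
        = pushout.inr s2t s2b ≫ pushout.inr τ1 τ2 := by

  -- maps from the four middles into each side
  set m11 : M11 ⟶ pushout τ1 τ2 := pushout.inl s1t s1b ≫ pushout.inl τ1 τ2 with hm11
  set m12 : M12 ⟶ pushout τ1 τ2 := pushout.inl s2t s2b ≫ pushout.inr τ1 τ2 with hm12
  set m21 : M21 ⟶ pushout τ1 τ2 := pushout.inr s1t s1b ≫ pushout.inl τ1 τ2 with hm21
  set m22 : M22 ⟶ pushout τ1 τ2 := pushout.inr s2t s2b ≫ pushout.inr τ1 τ2 with hm22
  set n11 : M11 ⟶ pushout σ1 σ2 := pushout.inl t1l t1r ≫ pushout.inl σ1 σ2 with hn11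
  set n12 : M12 ⟶ pushout σ1 σ2 := pushout.inr t1l t1r ≫ pushout.inl σ1 σ2 with hn12
  set n21 : M21 ⟶ pushout σ1 σ2 := pushout.inl t2l t2r ≫ pushout.inr σ1 σ2 with hn21
  set n22 : M22 ⟶ pushout σ1 σ2 := pushout.inr t2l t2r ≫ pushout.inr σ1 σ2 with hn22
  have w1 : t1l ≫ m11 = t1r ≫ m12 := by
    rw [hm11, hm12, ← Category.assoc, ← Category.assoc, ← hτ1l, ← hτ2l,
      Category.assoc, Category.assoc, pushout.condition (f := τ1) (g := τ2)]
  have w2 : t2l ≫ m21 = t2r ≫ m22 := by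
    rw [hm21, hm22, ← Category.assoc, ← Category.assoc, ← hτ1r, ← hτ2r,
      Category.assoc, Category.assoc, pushout.condition (f := τ1) (g := τ2)]
  have v1 : s1t ≫ n11 = s1b ≫ n21 := by
    rw [hn11, hn21, ← Category.assoc, ← Category.assoc, ← hσ1l, ← hσ2l,
      Category.assoc, Category.assoc, pushout.condition (f := σ1) (g := σ2)]
  have v2 : s2t ≫ n12 = s2b ≫ n22 := by
    rw [hn12, hn22, ← Category.assoc, ← Category.assoc, ← hσ1r, ← hσ2r,
      Category.assoc, Category.assoc, pushout.condition (f := σ1) (g := σ2)]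
  have wσ : σ1 ≫ pushout.desc m11 m12 w1 = σ2 ≫ pushout.desc m21 m22 w2 := by
    apply pushout.hom_ext
    · rw [← Category.assoc, hσ1l, ← Category.assoc, hσ2l, Category.assoc,
        Category.assoc, pushout.inl_desc, pushout.inl_desc, hm11, hm21,
        ← Category.assoc, ← Category.assoc, pushout.condition (f := s1t) (g := s1b)]
    · rw [← Category.assoc, hσ1r, ← Category.assoc, hσ2r, Category.assoc,
        Category.assoc, pushout.inr_desc, pushout.inr_desc, hm12, hm22,
        ← Category.assoc, ← Category.assoc, pushout.condition (f := s2t) (g := s2b)]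
  have wτ : τ1 ≫ pushout.desc n11 n21 v1 = τ2 ≫ pushout.desc n12 n22 v2 := by
    apply pushout.hom_ext
    · rw [← Category.assoc, hτ1l, ← Category.assoc, hτ2l, Category.assoc,
        Category.assoc, pushout.inl_desc, pushout.inl_desc, hn11, hn12,
        ← Category.assoc, ← Category.assoc, pushout.condition (f := t1l) (g := t1r)]
    · rw [← Category.assoc, hτ1r, ← Category.assoc, hτ2r, Category.assoc,
        Category.assoc, pushout.inr_desc, pushout.inr_desc, hn21, hn22,
        ← Category.assoc, ← Category.assoc, pushout.condition (f := t2l) (g := t2r)]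
  clear_value m11 m12 m21 m22 n11 n12 n21 n22
  refine ⟨⟨pushout.desc (pushout.desc m11 m12 w1) (pushout.desc m21 m22 w2) wσ,
    pushout.desc (pushout.desc n11 n21 v1) (pushout.desc n12 n22 v2) wτ, ?_, ?_⟩,
    ?_, ?_, ?_, ?_⟩
  · apply pushout.hom_ext <;> apply pushout.hom_ext <;>
      simp only [Category.assoc, pushout.inl_desc_assoc, pushout.inr_desc_assoc, pushout.inl_desc, pushout.inr_desc] <;>
      simp only [hm11, hm12, hm21, hm22, Category.assoc, pushout.inl_desc_assoc, pushout.inr_desc_assoc, pushout.inl_desc, pushout.inr_desc] <;> simp [hn11, hn12, hn21, hn22]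
  · apply pushout.hom_ext <;> apply pushout.hom_ext <;>
      simp only [Category.assoc, pushout.inl_desc_assoc, pushout.inr_desc_assoc, pushout.inl_desc, pushout.inr_desc] <;>
      simp only [hn11, hn12, hn21, hn22, Category.assoc, pushout.inl_desc_assoc, pushout.inr_desc_assoc, pushout.inl_desc, pushout.inr_desc] <;> simp [hm11, hm12, hm21, hm22]
  all_goals simp only [hn11, hn12, hn21, hn22, Category.assoc, pushout.inl_desc_assoc, pushout.inr_desc_assoc, pushout.inl_desc, pushout.inr_desc] <;> simp [hm11, hm12, hm21, hm22]
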